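/- Let α ≠ 0 and β be real numbers, and define the smooth vector fields on ℝ²: X₁(t,x) = (1, 0), X₂(t,x) = (e^{2αt}, (αx+β)e^{2αt}), X₃(t,x) = (0, e^{αt}). Then their Lie brackets satisfy: [X₁, X₂] = 2α·X₂, [X₁, X₃] = α·X₃, and [X₂, X₃] = 0, where each identity holds pointwise on ℝ². -/

import Mathlib

noncomputable def lieBracketR2 (V W : ℝ × ℝ → ℝ × ℝ) : ℝ × ℝ → ℝ × ℝ :=
  fun p => fderiv ℝ W p (V p) - fderiv ℝ V p (W p)

private lemma hexp (c : ℝ) (p : ℝ × ℝ) :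
    HasFDerivAt (fun q : ℝ × ℝ => Real.exp (c * q.1))
      ((c * Real.exp (c * p.1)) • ContinuousLinearMap.fst ℝ ℝ ℝ) p := by
  have h1 : HasDerivAt (fun t : ℝ => Real.exp (c * t)) (c * Real.exp (c * p.1)) p.1 := by
    simpa [mul_comm] using (((hasDerivAt_id p.1).const_mul c).exp)
  exact h1.comp_hasFDerivAt p (hasFDerivAt_fst)

private lemma hX2 (α β : ℝ) (p : ℝ × ℝ) :
    HasFDerivAt (fun q : ℝ × ℝ => (Real.exp (2 * α * q.1), (α * q.2 + β) * Real.exp (2 * α * q.1)))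
      (((2 * α * Real.exp (2 * α * p.1)) • ContinuousLinearMap.fst ℝ ℝ ℝ).prod
        ((Real.exp (2 * α * p.1)) • (α • ContinuousLinearMap.snd ℝ ℝ ℝ) +
          ((α * p.2 + β)) • ((2 * α * Real.exp (2 * α * p.1)) • ContinuousLinearMap.fst ℝ ℝ ℝ))) p := by
  refine HasFDerivAt.prodMk (hexp (2 * α) p) ?_
  have h2 : HasFDerivAt (fun q : ℝ × ℝ => α * q.2 + β)
      (α • ContinuousLinearMap.snd ℝ ℝ ℝ) p := by
    simpa using ((hasFDerivAt_snd (𝕜 := ℝ) (E := ℝ) (F := ℝ) (p := p)).const_mul α).add_const β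
  simpa [smul_smul, mul_comm, add_comm] using h2.fun_mul (hexp (2 * α) p)

private lemma hX3 (α : ℝ) (p : ℝ × ℝ) :
    HasFDerivAt (fun q : ℝ × ℝ => ((0 : ℝ), Real.exp (α * q.1)))
      ((0 : (ℝ × ℝ) →L[ℝ] ℝ).prod ((α * Real.exp (α * p.1)) • ContinuousLinearMap.fst ℝ ℝ ℝ)) p := by
  exact HasFDerivAt.prodMk (hasFDerivAt_const (0 : ℝ) p) (hexp α p)

theorem affine_drift_symmetry_algebra_brackets (α β : ℝ) (hα : α ≠ 0) :
    (∀ p : ℝ × ℝ,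
        lieBracketR2 (fun _ => ((1 : ℝ), (0 : ℝ)))
          (fun q => (Real.exp (2 * α * q.1), (α * q.2 + β) * Real.exp (2 * α * q.1))) p =
        (2 * α) • (Real.exp (2 * α * p.1), (α * p.2 + β) * Real.exp (2 * α * p.1))) ∧
    (∀ p : ℝ × ℝ,
        lieBracketR2 (fun _ => ((1 : ℝ), (0 : ℝ)))
          (fun q => ((0 : ℝ), Real.exp (α * q.1))) p =
        α • ((0 : ℝ), Real.exp (α * p.1))) ∧
    (∀ p : ℝ × ℝ,
        lieBracketR2
          (fun q => (Real.exp (2 * α * q.1), (α * q.2 + β) * Real.exp (2 * α * q.1)))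
          (fun q => ((0 : ℝ), Real.exp (α * q.1))) p = (0, 0)) := by
  refine ⟨fun p => ?_, fun p => ?_, fun p => ?_⟩
  · rw [lieBracketR2, (hX2 α β p).fderiv, fderiv_fun_const]
    simp [Prod.ext_iff]
    ring
  · rw [lieBracketR2, (hX3 α p).fderiv, fderiv_fun_const]
    simp [Prod.ext_iff]
  · rw [lieBracketR2, (hX3 α p).fderiv, (hX2 α β p).fderiv]
    simp [Prod.ext_iff]
    ring
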